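/- Let Y be a complex 3×3 matrix with SVD Y = U_L · diag(y₁, y₂, y₃) · U_R†, 0 ≤ y₁ ≤ y₂ ≤ y₃, y₃² > 2y₂². Let α index a longest row of Y and β a longest column of Y, and X = (2y₃² − y₂²)/(y₃² − 2y₂²). Writing the ratio R = (YY†)_{αα}(Y†Y)_{ββ}/|Y_{αβ}|², suppose y₃ > X y₂. Then |Y_{αβ}| ≥ |U_{L,α3}||U_{R,β3}| (y₃ − X y₂), i.e. the entry of Y common to its longest row and longest column is bounded below in terms of the third singular vectors' components. -/
import Mathlib

open Matrix

private lemma aux_norm (z : ℂ) : z * star z = ((‖z‖^2 : ℝ) : ℂ) := by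
  rw [Complex.star_def, Complex.mul_conj']; push_cast; ring

private lemma aux_diag (u : ℂ) (r : ℝ) : u * ((r:ℂ) * (r:ℂ)) * star u = ((‖u‖^2 * r^2 : ℝ) : ℂ) := by
  rw [Complex.star_def, mul_comm u, mul_assoc, Complex.mul_conj']; push_cast; ring

set_option maxHeartbeats 1600000 in
theorem common_entry_lower_bound
    (Y U_L U_R : Matrix (Fin 3) (Fin 3) ℂ) (y : Fin 3 → ℝ) (α β : Fin 3)
    (hUL : U_L ∈ Matrix.unitaryGroup (Fin 3) ℂ)
    (hUR : U_R ∈ Matrix.unitaryGroup (Fin 3) ℂ)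
    (hy0 : 0 ≤ y 0) (h01 : y 0 ≤ y 1) (h12 : y 1 ≤ y 2)
    (hgap : 2 * (y 1)^2 < (y 2)^2)
    (hSVD : Y = U_L * Matrix.diagonal (fun i => (y i : ℂ)) * U_Rᴴ)
    (hα : ∀ j, ∑ k, ‖Y j k‖^2 ≤ ∑ k, ‖Y α k‖^2)
    (hβ : ∀ j, ∑ k, ‖Y k j‖^2 ≤ ∑ k, ‖Y k β‖^2)
    (hX : (2 * (y 2)^2 - (y 1)^2) / ((y 2)^2 - 2 * (y 1)^2) * y 1 < y 2) :
    ‖U_L α 2‖ * ‖U_R β 2‖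
        * (y 2 - (2 * (y 2)^2 - (y 1)^2) / ((y 2)^2 - 2 * (y 1)^2) * y 1)
      ≤ ‖Y α β‖ := by
  have hUL1 : U_L * U_Lᴴ = 1 := by
    rw [← Matrix.star_eq_conjTranspose]; exact Matrix.mem_unitaryGroup_iff.mp hUL
  have hUL2 : U_Lᴴ * U_L = 1 := by
    rw [← Matrix.star_eq_conjTranspose]; exact Matrix.mem_unitaryGroup_iff'.mp hUL
  have hUR1 : U_R * U_Rᴴ = 1 := by
    rw [← Matrix.star_eq_conjTranspose]; exact Matrix.mem_unitaryGroup_iff.mp hUR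
  have hUR2 : U_Rᴴ * U_R = 1 := by
    rw [← Matrix.star_eq_conjTranspose]; exact Matrix.mem_unitaryGroup_iff'.mp hUR
  -- squared diagonal forms
  have hY2 : Y * Yᴴ = U_L * Matrix.diagonal (fun i => ((y i : ℂ) * (y i : ℂ))) * U_Lᴴ := by
    subst hSVD
    rw [Matrix.conjTranspose_mul, Matrix.conjTranspose_mul, Matrix.conjTranspose_conjTranspose,
      Matrix.diagonal_conjTranspose]
    calc U_L * Matrix.diagonal (fun i => (y i : ℂ)) * U_Rᴴ *
          (U_R * (Matrix.diagonal (star fun i => (y i : ℂ)) * U_Lᴴ))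
        = U_L * Matrix.diagonal (fun i => (y i : ℂ)) * (U_Rᴴ * U_R) *
          (Matrix.diagonal (star fun i => (y i : ℂ)) * U_Lᴴ) := by
          simp only [Matrix.mul_assoc]
      _ = U_L * (Matrix.diagonal (fun i => (y i : ℂ)) * Matrix.diagonal (star fun i => (y i : ℂ))) * U_Lᴴ := by
          rw [hUR2, Matrix.mul_one]; simp only [Matrix.mul_assoc]
      _ = _ := by
          rw [Matrix.diagonal_mul_diagonal]; congr 2; funext i
          simp [Pi.star_apply, Complex.star_def, Complex.conj_ofReal]
  have hY2' : Yᴴ * Y = U_R * Matrix.diagonal (fun i => ((y i : ℂ) * (y i : ℂ))) * U_Rᴴ := by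
    subst hSVD
    rw [Matrix.conjTranspose_mul, Matrix.conjTranspose_mul, Matrix.conjTranspose_conjTranspose,
      Matrix.diagonal_conjTranspose]
    calc U_R * (Matrix.diagonal (star fun i => (y i : ℂ)) * U_Lᴴ) *
          (U_L * Matrix.diagonal (fun i => (y i : ℂ)) * U_Rᴴ)
        = U_R * Matrix.diagonal (star fun i => (y i : ℂ)) * (U_Lᴴ * U_L) *
          (Matrix.diagonal (fun i => (y i : ℂ)) * U_Rᴴ) := by
          simp only [Matrix.mul_assoc]
      _ = U_R * (Matrix.diagonal (star fun i => (y i : ℂ)) * Matrix.diagonal (fun i => (y i : ℂ))) * U_Rᴴ := by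
          rw [hUL2, Matrix.mul_one]; simp only [Matrix.mul_assoc]
      _ = _ := by
          rw [Matrix.diagonal_mul_diagonal]; congr 2; funext i
          simp [Pi.star_apply, Complex.star_def, Complex.conj_ofReal]
  -- row sums of Y in terms of U_L
  have hrow : ∀ j, (∑ k, ‖Y j k‖^2)
      = ‖U_L j 0‖^2 * (y 0)^2 + ‖U_L j 1‖^2 * (y 1)^2 + ‖U_L j 2‖^2 * (y 2)^2 := by
    intro j
    have h1 : ((∑ k, ‖Y j k‖^2 : ℝ) : ℂ) = (Y * Yᴴ) j j := by
      simp only [Matrix.mul_apply, Matrix.conjTranspose_apply, Fin.sum_univ_three]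
      rw [aux_norm, aux_norm, aux_norm]; push_cast; ring
    have h2 : (Y * Yᴴ) j j
        = ((‖U_L j 0‖^2 * (y 0)^2 + ‖U_L j 1‖^2 * (y 1)^2 + ‖U_L j 2‖^2 * (y 2)^2 : ℝ) : ℂ) := by
      rw [hY2]
      simp only [Matrix.mul_apply, Matrix.conjTranspose_apply, Fin.sum_univ_three]
      simp only [Matrix.diagonal_apply, Fin.isValue, if_pos rfl]
      simp only [show ((2:Fin 3) = 0) ↔ False from by decide, show ((2:Fin 3) = 1) ↔ False from by decide,
        show ((0:Fin 3) = 2) ↔ False from by decide, show ((1:Fin 3) = 2) ↔ False from by decide,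
        show ((0:Fin 3) = 1) ↔ False from by decide, show ((1:Fin 3) = 0) ↔ False from by decide,
        if_false, if_true, add_zero, zero_add, mul_zero, zero_mul]
      rw [aux_diag, aux_diag, aux_diag]; push_cast; ring
    exact_mod_cast h1.trans h2
  -- column sums of Y in terms of U_R
  have hcol : ∀ j, (∑ k, ‖Y k j‖^2)
      = ‖U_R j 0‖^2 * (y 0)^2 + ‖U_R j 1‖^2 * (y 1)^2 + ‖U_R j 2‖^2 * (y 2)^2 := by
    intro j
    have h1 : ((∑ k, ‖Y k j‖^2 : ℝ) : ℂ) = (Yᴴ * Y) j j := by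
      simp only [Matrix.mul_apply, Matrix.conjTranspose_apply, Fin.sum_univ_three]
      rw [mul_comm _ (Y 0 j), mul_comm _ (Y 1 j), mul_comm _ (Y 2 j)]
      rw [aux_norm, aux_norm, aux_norm]; push_cast; ring
    have h2 : (Yᴴ * Y) j j
        = ((‖U_R j 0‖^2 * (y 0)^2 + ‖U_R j 1‖^2 * (y 1)^2 + ‖U_R j 2‖^2 * (y 2)^2 : ℝ) : ℂ) := by
      rw [hY2']
      simp only [Matrix.mul_apply, Matrix.conjTranspose_apply, Fin.sum_univ_three]
      simp only [Matrix.diagonal_apply, Fin.isValue, if_pos rfl]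
      simp only [show ((2:Fin 3) = 0) ↔ False from by decide, show ((2:Fin 3) = 1) ↔ False from by decide,
        show ((0:Fin 3) = 2) ↔ False from by decide, show ((1:Fin 3) = 2) ↔ False from by decide,
        show ((0:Fin 3) = 1) ↔ False from by decide, show ((1:Fin 3) = 0) ↔ False from by decide,
        if_false, if_true, add_zero, zero_add, mul_zero, zero_mul]
      rw [aux_diag, aux_diag, aux_diag]; push_cast; ring
    exact_mod_cast h1.trans h2
  -- unitary row/column norms
  have hrownorm : ∀ (U : Matrix (Fin 3) (Fin 3) ℂ), U * Uᴴ = 1 → ∀ j,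
      ‖U j 0‖^2 + ‖U j 1‖^2 + ‖U j 2‖^2 = 1 := by
    intro U hU j
    have h1 : (U * Uᴴ) j j = 1 := by rw [hU]; simp
    rw [Matrix.mul_apply] at h1
    simp only [Matrix.conjTranspose_apply, Fin.sum_univ_three] at h1
    rw [aux_norm, aux_norm, aux_norm] at h1
    exact_mod_cast h1
  have hcolnorm : ∀ (U : Matrix (Fin 3) (Fin 3) ℂ), Uᴴ * U = 1 → ∀ i,
      ‖U 0 i‖^2 + ‖U 1 i‖^2 + ‖U 2 i‖^2 = 1 := by
    intro U hU i
    have h1 : (Uᴴ * U) i i = 1 := by rw [hU]; simp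
    rw [Matrix.mul_apply] at h1
    simp only [Matrix.conjTranspose_apply, Fin.sum_univ_three] at h1
    rw [mul_comm _ (U 0 i), mul_comm _ (U 1 i), mul_comm _ (U 2 i)] at h1
    rw [aux_norm, aux_norm, aux_norm] at h1
    exact_mod_cast h1
  -- basic positivity
  have hy1 : (0:ℝ) ≤ y 1 := hy0.trans h01
  have hy2 : (0:ℝ) ≤ y 2 := hy1.trans h12
  -- abbreviations
  set a0 := ‖U_L α 0‖ with ha0
  set a1 := ‖U_L α 1‖ with ha1
  set a2 := ‖U_L α 2‖ with ha2
  set b0 := ‖U_R β 0‖ with hb0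
  set b1 := ‖U_R β 1‖ with hb1
  set b2 := ‖U_R β 2‖ with hb2
  have na0 : 0 ≤ a0 := by rw [ha0]; exact norm_nonneg _
  have na1 : 0 ≤ a1 := by rw [ha1]; exact norm_nonneg _
  have na2 : 0 ≤ a2 := by rw [ha2]; exact norm_nonneg _
  have nb0 : 0 ≤ b0 := by rw [hb0]; exact norm_nonneg _
  have nb1 : 0 ≤ b1 := by rw [hb1]; exact norm_nonneg _
  have nb2 : 0 ≤ b2 := by rw [hb2]; exact norm_nonneg _
  have hDpos : (0:ℝ) < y 2^2 - 2*y 1^2 := by linarith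
  have hNpos : (0:ℝ) < 2*y 2^2 - y 1^2 := by nlinarith [sq_nonneg (y 1)]
  have hA : a0^2 + a1^2 + a2^2 = 1 := hrownorm U_L hUL1 α
  have hB : b0^2 + b1^2 + b2^2 = 1 := hrownorm U_R hUR1 β
  -- trace identities
  have htr : (∑ k, ‖Y 0 k‖^2) + (∑ k, ‖Y 1 k‖^2) + (∑ k, ‖Y 2 k‖^2)
      = y 0^2 + y 1^2 + y 2^2 := by
    rw [hrow 0, hrow 1, hrow 2]
    have c0 := hcolnorm U_L hUL2 0
    have c1 := hcolnorm U_L hUL2 1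
    have c2 := hcolnorm U_L hUL2 2
    linear_combination y 0^2 * c0 + y 1^2 * c1 + y 2^2 * c2
  have htr' : (∑ k, ‖Y k 0‖^2) + (∑ k, ‖Y k 1‖^2) + (∑ k, ‖Y k 2‖^2)
      = y 0^2 + y 1^2 + y 2^2 := by
    rw [hcol 0, hcol 1, hcol 2]
    have c0 := hcolnorm U_R hUR2 0
    have c1 := hcolnorm U_R hUR2 1
    have c2 := hcolnorm U_R hUR2 2
    linear_combination y 0^2 * c0 + y 1^2 * c1 + y 2^2 * c2
  have hαbig : y 0^2 + y 1^2 + y 2^2 ≤ 3 * (∑ k, ‖Y α k‖^2) := by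
    have h0 := hα 0; have h1 := hα 1; have h2 := hα 2
    linarith [htr]
  have hβbig : y 0^2 + y 1^2 + y 2^2 ≤ 3 * (∑ k, ‖Y k β‖^2) := by
    have h0 := hβ 0; have h1 := hβ 1; have h2 := hβ 2
    linarith [htr']
  -- the Lemma bounds
  have hLa : (1 - a2^2) * (y 2^2 - 2*y 1^2) ≤ a2^2 * (2*y 2^2 - y 1^2) := by
    have hr := hrow α
    rw [hr] at hαbig
    rw [← ha0, ← ha1, ← ha2] at hαbig
    have f3 : 0 ≤ a0^2 * (y 1^2 - y 0^2) :=
      mul_nonneg (sq_nonneg a0) (sub_nonneg.mpr (pow_le_pow_left₀ hy0 h01 2))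
    have f5 : (a0^2 + a1^2 + a2^2) * y 1^2 = y 1^2 := by rw [hA]; ring
    linarith [hαbig, f3, f5, sq_nonneg (y 0), sq_nonneg a0, sq_nonneg a1]
  have hLb : (1 - b2^2) * (y 2^2 - 2*y 1^2) ≤ b2^2 * (2*y 2^2 - y 1^2) := by
    have hr := hcol β
    rw [hr] at hβbig
    rw [← hb0, ← hb1, ← hb2] at hβbig
    have f3 : 0 ≤ b0^2 * (y 1^2 - y 0^2) :=
      mul_nonneg (sq_nonneg b0) (sub_nonneg.mpr (pow_le_pow_left₀ hy0 h01 2))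
    have f5 : (b0^2 + b1^2 + b2^2) * y 1^2 = y 1^2 := by rw [hB]; ring
    linarith [hβbig, f3, f5, sq_nonneg (y 0), sq_nonneg b0, sq_nonneg b1]
  -- entry expansion and triangle inequality
  have hentry : Y α β = U_L α 0 * ((y 0 : ℝ) : ℂ) * star (U_R β 0)
      + U_L α 1 * ((y 1 : ℝ) : ℂ) * star (U_R β 1)
      + U_L α 2 * ((y 2 : ℝ) : ℂ) * star (U_R β 2) := by
    rw [hSVD]
    simp only [Matrix.mul_apply, Matrix.conjTranspose_apply, Fin.sum_univ_three,
      Matrix.diagonal_apply, Fin.isValue, if_pos rfl]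
    simp only [show ((2:Fin 3) = 0) ↔ False from by decide, show ((2:Fin 3) = 1) ↔ False from by decide,
      show ((0:Fin 3) = 2) ↔ False from by decide, show ((1:Fin 3) = 2) ↔ False from by decide,
      show ((0:Fin 3) = 1) ↔ False from by decide, show ((1:Fin 3) = 0) ↔ False from by decide,
      if_false, if_true, add_zero, zero_add, mul_zero, zero_mul]
  have hn0 : ‖U_L α 0 * ((y 0 : ℝ) : ℂ) * star (U_R β 0)‖ = a0 * y 0 * b0 := by
    rw [ha0, hb0]; simp [norm_mul, Complex.norm_real, Real.norm_eq_abs, abs_of_nonneg hy0]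
  have hn1 : ‖U_L α 1 * ((y 1 : ℝ) : ℂ) * star (U_R β 1)‖ = a1 * y 1 * b1 := by
    rw [ha1, hb1]; simp [norm_mul, Complex.norm_real, Real.norm_eq_abs, abs_of_nonneg hy1]
  have hn2 : ‖U_L α 2 * ((y 2 : ℝ) : ℂ) * star (U_R β 2)‖ = a2 * y 2 * b2 := by
    rw [ha2, hb2]; simp [norm_mul, Complex.norm_real, Real.norm_eq_abs, abs_of_nonneg hy2]
  have htri : a2 * y 2 * b2 - a0 * y 0 * b0 - a1 * y 1 * b1 ≤ ‖Y α β‖ := by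
    set z0 := U_L α 0 * ((y 0 : ℝ) : ℂ) * star (U_R β 0) with hz0
    set z1 := U_L α 1 * ((y 1 : ℝ) : ℂ) * star (U_R β 1) with hz1
    set z2 := U_L α 2 * ((y 2 : ℝ) : ℂ) * star (U_R β 2) with hz2
    have key : ‖z2‖ ≤ ‖Y α β‖ + ‖z0 + z1‖ := by
      calc ‖z2‖ = ‖Y α β - (z0 + z1)‖ := by rw [hentry]; congr 1; ring
        _ ≤ ‖Y α β‖ + ‖z0 + z1‖ := norm_sub_le _ _
    have h01' := norm_add_le z0 z1
    rw [hn0] at *; rw [hn1] at *; rw [hn2] at *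
    linarith
  -- Cauchy–Schwarz and combination
  have hCS : (a0*b0 + a1*b1)^2 ≤ (a0^2 + a1^2) * (b0^2 + b1^2) := by
    nlinarith [sq_nonneg (a0*b1 - a1*b0)]
  have ea : a0^2 + a1^2 = 1 - a2^2 := by linarith
  have eb : b0^2 + b1^2 = 1 - b2^2 := by linarith
  have h1b : 0 ≤ (1 - b2^2) * (y 2^2 - 2*y 1^2) := by nlinarith [sq_nonneg b0, sq_nonneg b1]
  have hprod : (1 - a2^2) * (y 2^2 - 2*y 1^2) * ((1 - b2^2) * (y 2^2 - 2*y 1^2))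
      ≤ a2^2 * (2*y 2^2 - y 1^2) * (b2^2 * (2*y 2^2 - y 1^2)) :=
    mul_le_mul hLa hLb h1b (by positivity)
  have hsq : ((a0*b0 + a1*b1) * (y 2^2 - 2*y 1^2))^2 ≤ (a2*b2*(2*y 2^2 - y 1^2))^2 := by
    calc ((a0*b0 + a1*b1) * (y 2^2 - 2*y 1^2))^2
        = (a0*b0 + a1*b1)^2 * (y 2^2 - 2*y 1^2)^2 := by ring
      _ ≤ (a0^2 + a1^2) * (b0^2 + b1^2) * (y 2^2 - 2*y 1^2)^2 :=
          mul_le_mul_of_nonneg_right hCS (sq_nonneg _)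
      _ = (1 - a2^2) * (y 2^2 - 2*y 1^2) * ((1 - b2^2) * (y 2^2 - 2*y 1^2)) := by
          rw [ea, eb]; ring
      _ ≤ a2^2 * (2*y 2^2 - y 1^2) * (b2^2 * (2*y 2^2 - y 1^2)) := hprod
      _ = (a2*b2*(2*y 2^2 - y 1^2))^2 := by ring
  have hABnn : 0 ≤ a0*b0 + a1*b1 := by positivity
  have hmain : (a0*b0 + a1*b1) * (y 2^2 - 2*y 1^2) ≤ a2*b2*(2*y 2^2 - y 1^2) :=
    le_of_pow_le_pow_left₀ two_ne_zero
      (mul_nonneg (mul_nonneg na2 nb2) hNpos.le) hsq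
  have hterm : a0 * y 0 * b0 + a1 * y 1 * b1 ≤ y 1 * (a0*b0 + a1*b1) := by
    have h := mul_le_mul_of_nonneg_left h01 (mul_nonneg na0 nb0)
    linarith [h]
  have hdiv : y 1 * (a0*b0 + a1*b1)
      ≤ a2 * b2 * ((2*y 2^2 - y 1^2) / (y 2^2 - 2*y 1^2) * y 1) := by
    rw [show a2 * b2 * ((2*y 2^2 - y 1^2) / (y 2^2 - 2*y 1^2) * y 1)
        = a2 * b2 * (2*y 2^2 - y 1^2) * y 1 / (y 2^2 - 2*y 1^2) from by ring]
    rw [le_div_iff₀ hDpos]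
    have h := mul_le_mul_of_nonneg_left hmain hy1
    linarith [h]
  calc a2 * b2 * (y 2 - (2 * y 2^2 - y 1^2) / (y 2^2 - 2 * y 1^2) * y 1)
      = a2 * y 2 * b2 - a2 * b2 * ((2*y 2^2 - y 1^2) / (y 2^2 - 2*y 1^2) * y 1) := by ring
    _ ≤ ‖Y α β‖ := by linarith [htri, hdiv, hterm]
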